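/- For any probability measure μ on a measurable space Ξ and any measurable function f : Ξ → ℝ with e^f ∈ L¹(μ), the supremum over probability measures ν absolutely continuous with respect to μ of (E_ν[f] − KL(ν‖μ)) equals log E_μ[e^f]. -/

import Mathlib

open MeasureTheory

/-- Kullback–Leibler divergence `∫ log(dν/dμ) dν` (junk value if not defined). -/
noncomputable def klDiv {Ξ : Type*} [MeasurableSpace Ξ] (ν μ : Measure Ξ) : ℝ :=
  ∫ x, Real.log ((ν.rnDeriv μ x).toReal) ∂ν

private lemma young_log (a r : ℝ) (hr : 0 ≤ r) :
    a * r ≤ Real.exp a + r * Real.log r - r := by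
  rcases hr.eq_or_lt with h | h
  · simp [← h]; positivity
  · have h1 : (a - Real.log r) + 1 ≤ Real.exp (a - Real.log r) := Real.add_one_le_exp _
    have h2 : Real.exp (a - Real.log r) = Real.exp a / r := by
      rw [Real.exp_sub, Real.exp_log h]
    rw [h2, le_div_iff₀ h] at h1
    nlinarith

private lemma dv_upper {Ξ : Type*} [MeasurableSpace Ξ] (μ : Measure Ξ)
    [IsProbabilityMeasure μ] (f : Ξ → ℝ)
    (hint : Integrable (fun x => Real.exp (f x)) μ)
    (ν : Measure Ξ) (hP : IsProbabilityMeasure ν) (hac : ν ≪ μ)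
    (hfi : Integrable f ν)
    (hli : Integrable (fun x => Real.log ((ν.rnDeriv μ x).toReal)) ν) :
    (∫ x, f x ∂ν) - (∫ x, Real.log ((ν.rnDeriv μ x).toReal) ∂ν)
      ≤ Real.log (∫ x, Real.exp (f x) ∂μ) := by
  set Z := ∫ x, Real.exp (f x) ∂μ with hZdef
  have hZ : 0 < Z := integral_exp_pos hint
  set ρ : Ξ → ℝ := fun x => (ν.rnDeriv μ x).toReal with hρdef
  have hρ0 : ∀ x, 0 ≤ ρ x := fun x => ENNReal.toReal_nonneg
  have hpt : ∀ x, (f x - Real.log Z) * ρ x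
      ≤ Real.exp (f x - Real.log Z) + ρ x * Real.log (ρ x) - ρ x :=
    fun x => young_log _ _ (hρ0 x)
  have hintL : Integrable (fun x => (f x - Real.log Z) * ρ x) μ := by
    have := (integrable_rnDeriv_smul_iff hac (f := fun x => f x - Real.log Z)).mpr
      (hfi.sub (integrable_const _))
    simpa [smul_eq_mul, mul_comm] using this
  have hexp : Integrable (fun x => Real.exp (f x - Real.log Z)) μ := by
    simp_rw [Real.exp_sub]
    exact hint.div_const _
  have hρlog : Integrable (fun x => ρ x * Real.log (ρ x)) μ := by
    have := (integrable_rnDeriv_smul_iff hac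
      (f := fun x => Real.log (ρ x))).mpr hli
    simpa [smul_eq_mul] using this
  have hρint : Integrable ρ μ := Measure.integrable_toReal_rnDeriv
  have hineq := integral_mono hintL ((hexp.add hρlog).sub hρint) hpt
  simp only [Pi.sub_apply, Pi.add_apply] at hineq
  have hRint : Integrable (fun a => Real.exp (f a - Real.log Z) + ρ a * Real.log (ρ a)) μ :=
    hexp.add hρlog
  rw [integral_sub hRint hρint, integral_add hexp hρlog] at hineq
  have h1 : ∫ x, (f x - Real.log Z) * ρ x ∂μ = (∫ x, f x ∂ν) - Real.log Z := by
    have := integral_rnDeriv_smul hac (f := fun x => f x - Real.log Z)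
    simp only [smul_eq_mul] at this
    rw [show (fun x => (f x - Real.log Z) * ρ x) = fun x => ρ x * (f x - Real.log Z) by
      funext x; ring]
    rw [this, integral_sub hfi (integrable_const _), integral_const]
    simp
  have h2 : ∫ x, Real.exp (f x - Real.log Z) ∂μ = 1 := by
    simp_rw [Real.exp_sub, Real.exp_log hZ]
    rw [integral_div, ← hZdef, div_self hZ.ne']
  have h3 : ∫ x, ρ x * Real.log (ρ x) ∂μ = ∫ x, Real.log (ρ x) ∂ν := by
    have := integral_rnDeriv_smul hac (f := fun x => Real.log (ρ x))
    simpa [smul_eq_mul] using this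
  have h4 : ∫ x, ρ x ∂μ = 1 := by
    rw [hρdef, Measure.integral_toReal_rnDeriv hac]
    simp
  rw [h1, h2, h3, h4] at hineq
  linarith

/-- **Donsker–Varadhan variational formula.** For a probability measure `μ` and a
measurable `f` with `e^f ∈ L¹(μ)`, the supremum of `E_ν[f] − KL(ν‖μ)` over probability
measures `ν ≪ μ` (for which the quantities are defined) equals `log E_μ[e^f]`. -/
theorem donsker_varadhan {Ξ : Type*} [MeasurableSpace Ξ] (μ : Measure Ξ)
    [IsProbabilityMeasure μ] (f : Ξ → ℝ) (hf : Measurable f)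
    (hint : Integrable (fun x => Real.exp (f x)) μ) :
    IsLUB {v : ℝ | ∃ ν : Measure Ξ, IsProbabilityMeasure ν ∧ ν ≪ μ ∧
        Integrable f ν ∧
        Integrable (fun x => Real.log ((ν.rnDeriv μ x).toReal)) ν ∧
        v = (∫ x, f x ∂ν) - klDiv ν μ}
      (Real.log (∫ x, Real.exp (f x) ∂μ)) := by
  constructor
  · rintro v ⟨ν, hP, hac, hfi, hli, rfl⟩
    exact dv_upper μ f hint ν hP hac hfi hli
  · -- least upper bound: approximate with tilted truncations
    intro b hb
    set Z := ∫ x, Real.exp (f x) ∂μ with hZdef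
    have hZ : 0 < Z := integral_exp_pos hint
    -- truncations
    set g : ℕ → Ξ → ℝ := fun n x => min (f x) n with hgdef
    have hgm : ∀ n, Measurable (g n) := fun n => hf.min measurable_const
    have hgle : ∀ n x, g n x ≤ f x := fun n x => min_le_left _ _
    have hexpg : ∀ n, Integrable (fun x => Real.exp (g n x)) μ := by
      intro n
      refine hint.mono (hgm n).exp.aestronglyMeasurable (Filter.Eventually.of_forall fun x => ?_)
      rw [Real.norm_of_nonneg (Real.exp_pos _).le, Real.norm_of_nonneg (Real.exp_pos _).le]
      exact Real.exp_le_exp.mpr (hgle n x)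
    set Zn : ℕ → ℝ := fun n => ∫ x, Real.exp (g n x) ∂μ with hZndef
    have hZnpos : ∀ n, 0 < Zn n := fun n => integral_exp_pos (hexpg n)
    -- main step: log (Zn n) ≤ b for each n
    have key : ∀ n : ℕ, Real.log (Zn n) ≤ b := by
      intro n
      set ν := μ.tilted (g n) with hν
      have hPν : IsProbabilityMeasure ν := isProbabilityMeasure_tilted (hexpg n)
      have hacν : ν ≪ μ := tilted_absolutelyContinuous μ (g n)
      -- integrability of f against ν
      have hfgint : Integrable (fun x => f x * Real.exp (g n x)) μ := by
        refine ((integrable_const (Real.exp (-1))).add (hint.const_mul (Real.exp n))).mono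
          (hf.mul (hgm n).exp).aestronglyMeasurable (Filter.Eventually.of_forall fun x => ?_)
        have h1 : 0 ≤ Real.exp (-1) + Real.exp (n:ℝ) * Real.exp (f x) := by positivity
        simp only [Pi.add_apply]
        rw [Real.norm_of_nonneg h1, Real.norm_eq_abs, abs_mul,
          abs_of_nonneg (Real.exp_pos _).le]
        rcases le_or_gt (f x) 0 with hx | hx
        · have hgx : g n x = f x := min_eq_left (hx.trans (Nat.cast_nonneg n))
          have hb1 : |f x| * Real.exp (g n x) ≤ Real.exp (-1) := by
            rw [hgx, abs_of_nonpos hx]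
            have h5 := Real.add_one_le_exp (-(f x) - 1)
            have h2 : Real.exp (-(f x) - 1) = Real.exp (-1) / Real.exp (f x) := by
              rw [show -(f x) - 1 = (-1) + (-(f x)) by ring, Real.exp_add, Real.exp_neg (f x),
                div_eq_mul_inv]
            rw [h2] at h5
            have h3 := Real.exp_pos (f x)
            calc -(f x) * Real.exp (f x)
                ≤ (Real.exp (-1) / Real.exp (f x)) * Real.exp (f x) := by
                  apply mul_le_mul_of_nonneg_right _ h3.le; linarith
              _ = Real.exp (-1) := by field_simp
          nlinarith [mul_nonneg (Real.exp_pos (n:ℝ)).le (Real.exp_pos (f x)).le]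
        · have h2 : |f x| ≤ Real.exp (f x) := by
            rw [abs_of_pos hx]
            have := Real.add_one_le_exp (f x); linarith
          have h3 : Real.exp (g n x) ≤ Real.exp (n:ℝ) :=
            Real.exp_le_exp.mpr (min_le_right _ _)
          have h4 : |f x| * Real.exp (g n x) ≤ Real.exp (f x) * Real.exp (n:ℝ) :=
            mul_le_mul h2 h3 (Real.exp_pos _).le (Real.exp_pos _).le
          nlinarith [Real.exp_pos (-1:ℝ)]
      have hfν : Integrable f ν := by
        rw [hν, Measure.tilted, integrable_withDensity_iff
          (by fun_prop) (Filter.Eventually.of_forall fun x => ENNReal.ofReal_lt_top)]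
        have heq : ∀ x, f x * (ENNReal.ofReal (Real.exp (g n x) / Zn n)).toReal
            = (f x * Real.exp (g n x)) / Zn n := by
          intro x
          rw [ENNReal.toReal_ofReal (div_nonneg (Real.exp_pos _).le (hZnpos n).le)]
          ring
        refine Integrable.congr ?_ (Filter.Eventually.of_forall fun x => (heq x).symm)
        exact hfgint.div_const _
      -- integrability of g n against ν
      have hgν : Integrable (g n) ν := by
        refine (hfν.abs.add (integrable_const (n:ℝ))).mono
          (hgm n).aestronglyMeasurable (Filter.Eventually.of_forall fun x => ?_)
        simp only [Pi.add_apply]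
        rw [Real.norm_eq_abs, Real.norm_of_nonneg (by positivity)]
        rcases abs_cases (g n x) with ⟨h1, _⟩ | ⟨h1, _⟩
        · rw [h1]
          exact (min_le_right _ _).trans (by simp [abs_nonneg])
        · rw [h1]
          have hm : g n x = min (f x) (n:ℝ) := rfl
          have h3 : (0:ℝ) ≤ (n:ℝ) := Nat.cast_nonneg n
          rcases min_cases (f x) ((n:ℝ)) with ⟨he, _⟩ | ⟨he, _⟩ <;> rw [hm, he] <;>
            nlinarith [neg_le_abs (f x), abs_nonneg (f x)]
      -- log rnDeriv equals g n - log Zn n a.e.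
      have hlogrn : (fun x => Real.log ((ν.rnDeriv μ x).toReal))
          =ᵐ[ν] fun x => g n x - Real.log (Zn n) :=
        hacν.ae_eq (log_rnDeriv_tilted_left_self (hexpg n))
      have hliν : Integrable (fun x => Real.log ((ν.rnDeriv μ x).toReal)) ν :=
        (hgν.sub (integrable_const _)).congr hlogrn.symm
      -- the value of this candidate
      have hval : (∫ x, f x ∂ν) - klDiv ν μ ∈ {v : ℝ | ∃ ν : Measure Ξ,
          IsProbabilityMeasure ν ∧ ν ≪ μ ∧ Integrable f ν ∧
          Integrable (fun x => Real.log ((ν.rnDeriv μ x).toReal)) ν ∧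
          v = (∫ x, f x ∂ν) - klDiv ν μ} := ⟨ν, hPν, hacν, hfν, hliν, rfl⟩
      have hkl : klDiv ν μ = (∫ x, g n x ∂ν) - Real.log (Zn n) := by
        rw [klDiv, integral_congr_ae hlogrn,
          integral_sub hgν (integrable_const _), integral_const]
        simp
      have hmono : Real.log (Zn n) ≤ (∫ x, f x ∂ν) - klDiv ν μ := by
        rw [hkl]
        have : ∫ x, g n x ∂ν ≤ ∫ x, f x ∂ν := integral_mono hgν hfν (hgle n)
        linarith
      exact hmono.trans (hb hval)
    -- Zn n → Z, hence log Zn n → log Z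
    have htend : Filter.Tendsto Zn Filter.atTop (nhds Z) := by
      refine tendsto_integral_of_dominated_convergence (fun x => Real.exp (f x))
        (fun n => (hgm n).exp.aestronglyMeasurable) hint
        (fun n => Filter.Eventually.of_forall fun x => ?_)
        (Filter.Eventually.of_forall fun x => ?_)
      · rw [Real.norm_of_nonneg (Real.exp_pos _).le]
        exact Real.exp_le_exp.mpr (hgle n x)
      · have : ∀ᶠ n : ℕ in Filter.atTop, Real.exp (g n x) = Real.exp (f x) := by
          obtain ⟨N, hN⟩ := exists_nat_ge (f x)
          filter_upwards [Filter.eventually_ge_atTop N] with m hm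
          have : f x ≤ (m:ℝ) := hN.trans (Nat.cast_le.mpr hm)
          simp [hgdef, min_eq_left this]
        exact tendsto_const_nhds.congr' (this.mono fun m hm => hm.symm)
    have hlogtend : Filter.Tendsto (fun n => Real.log (Zn n)) Filter.atTop
        (nhds (Real.log Z)) :=
      ((Real.continuousAt_log hZ.ne').tendsto.comp htend)
    exact le_of_tendsto hlogtend (Filter.Eventually.of_forall key)
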